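/- Let m : ℝ^{2d} → (0,∞) be measurable, S invertible, and suppose T := ess inf_{z} m(z)/m(S⁻¹ z) > 0. If the dilation D_S : L^{p,q}(ℝ^{2d}) → L^{p,q}(ℝ^{2d}) is not everywhere defined (i.e., there exists f ∈ L^{p,q} with f ∘ S⁻¹ ∉ L^{p,q}), then the weighted dilation (D_S)_m : L^{p,q}_m(ℝ^{2d}) → L^{p,q}_m(ℝ^{2d}), f ↦ f ∘ S⁻¹, is also not everywhere defined. -/

import Mathlib

open MeasureTheory
open scoped ENNReal

/-- The mixed-norm `L^{p,q}` norm: `‖f‖_{p,q} = ‖ ω ↦ ‖f(·,ω)‖_{L^p} ‖_{L^q}`. -/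
noncomputable def mixedNorm {d : ℕ} {E : Type*} [NormedAddCommGroup E]
    (p q : ℝ≥0∞) (f : (Fin d → ℝ) × (Fin d → ℝ) → E) : ℝ≥0∞ :=
  if q = ⊤ then essSup (fun ω => eLpNorm (fun x => f (x, ω)) p volume) volume
  else (∫⁻ ω, (eLpNorm (fun x => f (x, ω)) p volume) ^ q.toReal ∂volume) ^ (1 / q.toReal)

/-- Monotonicity up to a positive constant: if `c‖F z‖ ≤ ‖G z‖` a.e. and
`mixedNorm p q F = ⊤`, then `mixedNorm p q G = ⊤`. -/
lemma mixedNorm_top_of_ae_le {d : ℕ} (p q : ℝ≥0∞) (hq : 1 ≤ q) (c : ℝ) (hc : 0 < c)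
    (F G : (Fin d → ℝ) × (Fin d → ℝ) → ℂ)
    (h : ∀ᵐ z ∂(volume : Measure ((Fin d → ℝ) × (Fin d → ℝ))), c * ‖F z‖ ≤ ‖G z‖)
    (hF : mixedNorm p q F = ⊤) : mixedNorm p q G = ⊤ := by
  -- pass to iterated a.e. in the (ω, x) order
  rw [Measure.volume_eq_prod] at h
  have hswap : ∀ᵐ z ∂((volume : Measure (Fin d → ℝ)).prod volume),
      c * ‖F z.swap‖ ≤ ‖G z.swap‖ :=
    (Measure.measurePreserving_swap).quasiMeasurePreserving.tendsto_ae.eventually h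
  have hae : ∀ᵐ ω ∂(volume : Measure (Fin d → ℝ)),
      ∀ᵐ x ∂(volume : Measure (Fin d → ℝ)), c * ‖F (x, ω)‖ ≤ ‖G (x, ω)‖ :=
    Measure.ae_ae_of_ae_prod hswap
  -- a.e. ω : ofReal c * eLpNorm F(·,ω) ≤ eLpNorm G(·,ω)
  have key : ∀ᵐ ω ∂(volume : Measure (Fin d → ℝ)),
      ENNReal.ofReal c * eLpNorm (fun x => F (x, ω)) p volume ≤
        eLpNorm (fun x => G (x, ω)) p volume := by
    filter_upwards [hae] with ω hω
    have h1 : eLpNorm ((c : ℂ) • fun x => F (x, ω)) p volume ≤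
        eLpNorm (fun x => G (x, ω)) p volume := by
      refine eLpNorm_mono_ae ?_
      filter_upwards [hω] with x hx
      simpa [Pi.smul_apply, norm_smul, abs_of_pos hc] using hx
    have h2 := eLpNorm_const_smul (c : ℂ) (fun x => F (x, ω)) p
      (volume : Measure (Fin d → ℝ))
    have h3 : ‖(c : ℂ)‖ₑ = ENNReal.ofReal c := by
      rw [← ofReal_norm_eq_enorm, Complex.norm_real, Real.norm_eq_abs, abs_of_pos hc]
    rw [h2, h3] at h1
    exact h1
  have hc' : ENNReal.ofReal c ≠ 0 := by simpa using hc.not_ge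
  by_cases hqt : q = ⊤
  · rw [mixedNorm, if_pos hqt] at hF ⊢
    have : ENNReal.ofReal c * essSup (fun ω => eLpNorm (fun x => F (x, ω)) p volume) volume ≤
        essSup (fun ω => eLpNorm (fun x => G (x, ω)) p volume) volume := by
      rw [← ENNReal.essSup_const_mul]
      exact essSup_mono_ae key
    rw [hF, ENNReal.mul_top hc'] at this
    exact top_le_iff.mp this
  · rw [mixedNorm, if_neg hqt] at hF ⊢
    have hqr : 0 < q.toReal :=
      ENNReal.toReal_pos (by rintro rfl; simp at hq) hqt
    have hint : (∫⁻ ω, (eLpNorm (fun x => F (x, ω)) p volume) ^ q.toReal ∂volume) = ⊤ := by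
      by_contra hne
      exact absurd hF (by simp [ENNReal.rpow_eq_top_iff, hne,
        one_div_pos.mpr hqr, (one_div_pos.mpr hqr).not_gt])
    have h4 : (ENNReal.ofReal c) ^ q.toReal *
        (∫⁻ ω, (eLpNorm (fun x => F (x, ω)) p volume) ^ q.toReal ∂volume) ≤
        ∫⁻ ω, (eLpNorm (fun x => G (x, ω)) p volume) ^ q.toReal ∂volume := by
      rw [← lintegral_const_mul' _ _ (by simp : (ENNReal.ofReal c) ^ q.toReal ≠ ⊤)]
      refine lintegral_mono_ae ?_
      filter_upwards [key] with ω hω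
      calc (ENNReal.ofReal c) ^ q.toReal * (eLpNorm (fun x => F (x, ω)) p volume) ^ q.toReal
          = (ENNReal.ofReal c * eLpNorm (fun x => F (x, ω)) p volume) ^ q.toReal := by
            rw [ENNReal.mul_rpow_of_nonneg _ _ hqr.le]
        _ ≤ _ := ENNReal.rpow_le_rpow hω hqr.le
    rw [hint, ENNReal.mul_top (by simp [ENNReal.rpow_eq_zero_iff, hc', hqr])] at h4
    rw [top_le_iff.mp h4]
    exact ENNReal.top_rpow_of_pos (one_div_pos.mpr hqr)

theorem stmt8 (d : ℕ) (p q : ℝ≥0∞) (hp : 1 ≤ p) (hq : 1 ≤ q)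
    (m : (Fin d → ℝ) × (Fin d → ℝ) → ℝ) (hm : Measurable m) (hmpos : ∀ z, 0 < m z)
    (S : ((Fin d → ℝ) × (Fin d → ℝ)) ≃ₗ[ℝ] ((Fin d → ℝ) × (Fin d → ℝ)))
    (hT : 0 < essInf (fun z => ENNReal.ofReal (m z / m (S.symm z))) volume)
    (hDS : ∃ f : ((Fin d → ℝ) × (Fin d → ℝ)) → ℂ, AEStronglyMeasurable f volume ∧
      mixedNorm p q f < ⊤ ∧ mixedNorm p q (fun z => f (S.symm z)) = ⊤) :
    ∃ g : ((Fin d → ℝ) × (Fin d → ℝ)) → ℂ, AEStronglyMeasurable g volume ∧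
      mixedNorm p q (fun z => g z * (m z : ℂ)) < ⊤ ∧
      mixedNorm p q (fun z => g (S.symm z) * (m z : ℂ)) = ⊤ := by
  obtain ⟨f, hfm, hf1, hf2⟩ := hDS
  refine ⟨fun z => f z / (m z : ℂ), ?_, ?_, ?_⟩
  · simp only [div_eq_mul_inv]
    exact hfm.mul ((Complex.measurable_ofReal.comp hm).inv.aestronglyMeasurable)
  · have : (fun z => f z / (m z : ℂ) * (m z : ℂ)) = f := by
      funext z
      have : (m z : ℂ) ≠ 0 := by exact_mod_cast (hmpos z).ne'
      field_simp
    rw [this]; exact hf1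
  · -- choose the constant
    set T := essInf (fun z => ENNReal.ofReal (m z / m (S.symm z))) volume with hTdef
    set c : ℝ := (min T 1).toReal with hcdef
    have hcT : min T 1 ≠ ⊤ := ne_top_of_le_ne_top (by simp) (min_le_right _ _)
    have hc0 : 0 < c := ENNReal.toReal_pos (lt_min hT zero_lt_one).ne' hcT
    have hratio : ∀ᵐ z ∂(volume : Measure ((Fin d → ℝ) × (Fin d → ℝ))),
        c ≤ m z / m (S.symm z) := by
      filter_upwards [ae_essInf_le (f := fun z => ENNReal.ofReal (m z / m (S.symm z)))
        (μ := volume)] with z hz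
      have h1 : ENNReal.ofReal c ≤ ENNReal.ofReal (m z / m (S.symm z)) := by
        rw [hcdef, ENNReal.ofReal_toReal hcT]
        exact le_trans (min_le_left _ _) hz
      exact (ENNReal.ofReal_le_ofReal_iff
        (div_pos (hmpos z) (hmpos (S.symm z))).le).mp h1
    refine mixedNorm_top_of_ae_le p q hq c hc0 (fun z => f (S.symm z)) _ ?_ hf2
    filter_upwards [hratio] with z hz
    have hms : (m (S.symm z) : ℂ) ≠ 0 := by exact_mod_cast (hmpos (S.symm z)).ne'
    have : f (S.symm z) / (m (S.symm z) : ℂ) * (m z : ℂ)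
        = f (S.symm z) * ((m z / m (S.symm z) : ℝ) : ℂ) := by
      push_cast
      field_simp
    show c * ‖f (S.symm z)‖ ≤ ‖f (S.symm z) / (m (S.symm z) : ℂ) * (m z : ℂ)‖
    rw [this, norm_mul, Complex.norm_real, Real.norm_eq_abs,
      abs_of_pos (div_pos (hmpos z) (hmpos (S.symm z))), mul_comm]
    exact mul_le_mul_of_nonneg_left hz (norm_nonneg _)
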